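/- Let h be a Legendre function on a finite-dimensional Hilbert space and C a closed convex set with C ∩ int dom h nonempty. Then for every ω ∈ int dom h, the Bregman projection proj_C^h(ω) = argmin_{ω' ∈ C} d_h(ω', ω) exists, is unique, and lies in int dom h. -/

import Mathlib

open RealInnerProductSpace Filter


section Aux
open Set Metric Topology
variable {H : Type*} [NormedAddCommGroup H] [InnerProductSpace ℝ H] [CompleteSpace H]

/-- The gradient of a convex function at a point is a subgradient. -/
lemma subgrad_ineq {S : Set H} {f : H → ℝ} (hf : ConvexOn ℝ S f) {x : H} (hx : x ∈ S)
    {G : H} (hG : HasGradientAt f G x) {y : H} (hy : y ∈ S) :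
    f x + ⟪G, y - x⟫ ≤ f y := by
  set φ : ℝ → H := fun t => x + t • (y - x) with hφ
  have h0 : φ 0 = x := by simp [hφ]
  have hu : HasDerivAt φ (y - x) 0 := by
    simpa [hφ] using ((hasDerivAt_id (0:ℝ)).smul_const (y - x)).const_add x
  have hFD : HasFDerivAt f (InnerProductSpace.toDual ℝ H G) (φ 0) := by
    rw [h0]; exact hasGradientAt_iff_hasFDerivAt.mp hG
  have hder : HasDerivAt (f ∘ φ) ⟪G, y - x⟫ 0 := by
    simpa [InnerProductSpace.toDual_apply_apply] using hFD.comp_hasDerivAt (0:ℝ) hu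
  have hslope : Tendsto (slope (f ∘ φ) 0) (𝓝[>] (0:ℝ)) (𝓝 ⟪G, y - x⟫) :=
    (hasDerivAt_iff_tendsto_slope.mp hder).mono_left
      (nhdsWithin_mono _ fun t ht => ne_of_gt ht)
  have hbound : ∀ᶠ t in 𝓝[>] (0:ℝ), slope (f ∘ φ) 0 t ≤ f y - f x := by
    filter_upwards [Ioc_mem_nhdsGT_of_mem (Set.left_mem_Ico.mpr one_pos)] with t ht
    have hcx : φ t = (1 - t) • x + t • y := by
      simp [hφ, smul_sub, sub_smul]; abel
    have hconv := hf.2 hx hy (by linarith [ht.2] : (0:ℝ) ≤ 1 - t) ht.1.le (by ring)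
    rw [← hcx] at hconv
    have hφ0 : f (φ 0) = f x := by rw [h0]
    rw [slope_def_field, div_le_iff₀ (by simpa using ht.1)]
    simp only [Function.comp_apply, sub_zero] at *
    rw [smul_eq_mul, smul_eq_mul] at hconv
    nlinarith
  have := le_of_tendsto hslope hbound
  linarith
lemma strictD {S : Set H} {f : H → ℝ} (hf : StrictConvexOn ℝ S f) (v w : H) (b : ℝ) :
    StrictConvexOn ℝ S (fun x => f x - b - ⟪v, x - w⟫) := by
  refine ⟨hf.1, ?_⟩
  intro x hx y hy hxy a c ha hc hac
  have h1 := hf.2 hx hy hxy ha hc hac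
  have e : ⟪v, (a•x + c•y) - w⟫ = a*⟪v, x - w⟫ + c*⟪v, y - w⟫ := by
    simp only [inner_sub_right, inner_add_right, real_inner_smul_right]
    linear_combination ((inner ℝ v w : ℝ)) * hac
  simp only [smul_eq_mul] at *
  have hb : a*b + c*b = b := by linear_combination b * hac
  rw [e]; linarith

lemma gradD {f : H → ℝ} {G : H} {x : H} (hG : HasGradientAt f G x) (v w : H) (b : ℝ) :
    HasGradientAt (fun y => f y - b - ⟪v, y - w⟫) (G - v) x := by
  rw [hasGradientAt_iff_hasFDerivAt] at *
  have h2 : HasFDerivAt (fun y : H => ⟪v, y - w⟫) (innerSL ℝ v) x := by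
    have : HasFDerivAt (fun y : H => ⟪v, y⟫) (innerSL ℝ v) x := (innerSL ℝ v).hasFDerivAt
    simpa [inner_sub_right] using this.sub_const ⟪v, w⟫
  have h3 := (hG.sub_const b).sub h2
  have e : (InnerProductSpace.toDual ℝ H) (G - v) =
      (InnerProductSpace.toDual ℝ H) G - innerSL ℝ v := by
    ext z
    simp [InnerProductSpace.toDual_apply_apply, inner_sub_left]
  rw [e]; exact h3
lemma key_frontier {S : Set H} [FiniteDimensional ℝ H] (hSconv : Convex ℝ S)
    {D : H → ℝ} (hDconv : ConvexOn ℝ S D)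
    {gD : H → H} (hgD : ∀ x ∈ interior S, HasGradientAt D (gD x) x)
    {p c : H} (hp : p ∈ closure S) (hc : c ∈ interior S)
    {m K : ℝ}
    (hm : ∀ t ∈ Ioo (0:ℝ) 1, m ≤ D (p + t • (c - p)))
    (hup : ∀ t ∈ Ioo (0:ℝ) 1, D (p + t • (c - p)) ≤ m + t * K)
    (hbig : ∀ B : ℝ, ∃ t ∈ Ioo (0:ℝ) 1, B < ‖gD (p + t • (c - p))‖) : False := by
  set y : ℝ → H := fun t => p + t • (c - p) with hy
  have hyint : ∀ t ∈ Ioo (0:ℝ) 1, y t ∈ interior S := by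
    intro t ht
    have hmem := hSconv.combo_interior_closure_mem_interior hc hp ht.1
      (by linarith [ht.2] : (0:ℝ) ≤ 1 - t) (by ring)
    have he : y t = t • c + (1-t) • p := by simp only [hy]; module
    rwa [he]
  have hlow : ∀ t ∈ Ioo (0:ℝ) 1, 0 ≤ ⟪gD (y t), c - p⟫ := by
    intro t ht
    by_contra hneg; push_neg at hneg
    set I := ⟪gD (y t), c - p⟫ with hI
    have hε0 : 0 < -I := by linarith
    set ε := -I with hε
    set s := min (t/2) (t*ε/(4*(|K|+1))) with hs
    have habs : (0:ℝ) < |K| + 1 := by positivity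
    have hq : 0 < t*ε/(4*(|K|+1)) := div_pos (mul_pos ht.1 hε0) (by positivity)
    have hs0 : 0 < s := lt_min (by linarith [ht.1]) hq
    have hst : s < t := lt_of_le_of_lt (min_le_left _ _) (by linarith [ht.1])
    have hsmem : s ∈ Ioo (0:ℝ) 1 := ⟨hs0, lt_trans hst ht.2⟩
    have hsub := subgrad_ineq hDconv (interior_subset (hyint t ht))
      (hgD _ (hyint t ht)) (interior_subset (hyint s hsmem))
    have hys : y s - y t = (s - t) • (c - p) := by simp only [hy]; module
    rw [hys, real_inner_smul_right, ← hI] at hsub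
    have h1 := hm t ht
    have h2 := hup s hsmem
    have h3 : s ≤ t/2 := min_le_left _ _
    have h4 : s * (|K|+1) ≤ t*ε/4 := by
      have := min_le_right (t/2) (t*ε/(4*(|K|+1)))
      calc s * (|K|+1) ≤ (t*ε/(4*(|K|+1))) * (|K|+1) := by
            exact mul_le_mul_of_nonneg_right (hs ▸ this) habs.le
        _ = t*ε/4 := by field_simp
    have h5 : s * K ≤ s * (|K|+1) :=
      mul_le_mul_of_nonneg_left (by cases abs_cases K <;> linarith) hs0.le
    nlinarith [ht.1, hε0]
  obtain ⟨r, hr0, hball⟩ : ∃ r > 0, closedBall c r ⊆ interior S := by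
    obtain ⟨ε, hε, hb⟩ := Metric.isOpen_iff.mp isOpen_interior c hc
    exact ⟨ε/2, by linarith, (closedBall_subset_ball (by linarith)).trans hb⟩
  have hcont : ContinuousOn D (closedBall c r) := fun z hz =>
    ((hasGradientAt_iff_hasFDerivAt.mp (hgD z (hball hz))).continuousAt).continuousWithinAt
  obtain ⟨zmax, hzmem, hzmax⟩ := (isCompact_closedBall c r).exists_isMaxOn
    ⟨c, mem_closedBall_self hr0.le⟩ hcont
  set K' := D zmax with hK'
  have hbound : ∀ t ∈ Ioo (0:ℝ) 1, ‖gD (y t)‖ ≤ max 0 ((K' - m)/r) := by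
    intro t ht
    by_cases hz : gD (y t) = 0
    · simp [hz]
    · set Gt := gD (y t) with hGt
      have hGn : (0:ℝ) < ‖Gt‖ := norm_pos_iff.mpr hz
      set z := c + (r/‖Gt‖) • Gt with hzd
      have hzball : z ∈ closedBall c r := by
        have : dist z c = r := by
          simp only [hzd, dist_eq_norm, add_sub_cancel_left, norm_smul,
            Real.norm_eq_abs]
          rw [abs_of_pos (by positivity)]
          field_simp
        simp [this]
      have hsub := subgrad_ineq hDconv (interior_subset (hyint t ht))
        (hgD _ (hyint t ht)) (interior_subset (hball hzball))
      have hzyt : z - y t = (1-t) • (c - p) + (r/‖Gt‖) • Gt := by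
        simp only [hzd, hy]; module
      rw [hzyt, inner_add_right, real_inner_smul_right, real_inner_smul_right,
        real_inner_self_eq_norm_mul_norm] at hsub
      have e1 : r/‖Gt‖ * (‖Gt‖ * ‖Gt‖) = r * ‖Gt‖ := by field_simp
      rw [e1] at hsub
      have h1 := hm t ht
      have h2 := hlow t ht
      have h3 : D z ≤ K' := hzmax hzball
      have h4 : 0 ≤ (1-t) * ⟪Gt, c - p⟫ :=
        mul_nonneg (by linarith [ht.2]) h2
      have h5 : r * ‖Gt‖ ≤ K' - m := by linarith
      have h6 : ‖Gt‖ ≤ (K' - m)/r := (le_div_iff₀' hr0).mpr h5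
      exact h6.trans (le_max_right _ _)
  obtain ⟨t, ht, hgt⟩ := hbig (max 0 ((K' - m)/r))
  exact absurd (hbound t ht) (not_le.mpr hgt)

end Aux


set_option maxHeartbeats 1000000 in
/-- Bregman projection onto a closed convex set `C` meeting the interior of the
domain of a Legendre function `h`: for every `ω` in the interior of the domain,
the minimizer of `ω' ↦ d_h(ω', ω)` over `C` exists, is unique, and lies in the
interior of the domain. -/
theorem stmt_8 {H : Type*} [NormedAddCommGroup H] [InnerProductSpace ℝ H]
    [FiniteDimensional ℝ H]
    (S : Set H) (hSconv : Convex ℝ S) (hSne : (interior S).Nonempty)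
    (h : H → ℝ) (hconv : StrictConvexOn ℝ S h)
    (hlsc : LowerSemicontinuousOn h S)
    (g : H → H) (hg : ∀ x ∈ interior S, HasGradientAt h (g x) x)
    (hsteep : ∀ u : ℕ → H, (∀ n, u n ∈ interior S) →
      ∀ x ∈ frontier S, Tendsto u atTop (nhds x) →
        Tendsto (fun n => ‖g (u n)‖) atTop atTop)
    (C : Set H) (hCclosed : IsClosed C) (hCconv : Convex ℝ C)
    (hCS : (C ∩ interior S).Nonempty)
    (ω : H) (hω : ω ∈ interior S)
    (D : H → ℝ) (hD : ∀ ω', D ω' = h ω' - h ω - ⟪g ω, ω' - ω⟫) :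
    ∃ p, p ∈ C ∩ interior S ∧ (∀ q ∈ C ∩ S, D p ≤ D q) ∧
      ∀ q ∈ C ∩ S, (∀ r ∈ C ∩ S, D q ≤ D r) → q = p := by
  classical
  open Set Metric Topology in
  obtain ⟨c, hcC, hcint⟩ := hCS
  have hDrw : D = fun x => h x - h ω - ⟪g ω, x - ω⟫ := funext hD
  subst hDrw
  set D : H → ℝ := fun x => h x - h ω - ⟪g ω, x - ω⟫ with hDdef
  have hωS : ω ∈ S := interior_subset hω
  have hDstrict : StrictConvexOn ℝ S D := by
    rw [hDdef]; exact strictD hconv (g ω) ω (h ω)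
  have hDconv : ConvexOn ℝ S D := hDstrict.convexOn
  have hgD : ∀ x ∈ interior S, HasGradientAt D (g x - g ω) x := fun x hx => by
    rw [hDdef]; exact gradD (hg x hx) (g ω) ω (h ω)
  have hDcont : ∀ x ∈ interior S, ContinuousAt D x := fun x hx =>
    (hasGradientAt_iff_hasFDerivAt.mp (hgD x hx)).continuousAt
  have hD0 : D ω = 0 := by rw [hDdef]; simp
  have hDnonneg : ∀ x ∈ S, 0 ≤ D x := by
    intro x hx
    have := subgrad_ineq hconv.convexOn hωS (hg ω hω) hx
    rw [hDdef]; dsimp only; linarith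
  clear_value D
  have hDpos : ∀ x ∈ S, x ≠ ω → 0 < D x := by
    intro x hx hne
    have hmid := hDstrict.2 hx hωS hne (by norm_num : (0:ℝ) < 1/2)
      (by norm_num : (0:ℝ) < 1/2) (by norm_num)
    have hmidS : (1/2:ℝ) • x + (1/2:ℝ) • ω ∈ S :=
      hSconv hx hωS (by norm_num) (by norm_num) (by norm_num)
    have h2 := hDnonneg _ hmidS
    rw [hD0] at hmid
    simp only [smul_eq_mul] at hmid
    linarith
  set T := D '' (C ∩ S) with hT
  have hTne : T.Nonempty := ⟨D c, c, ⟨hcC, interior_subset hcint⟩, rfl⟩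
  have hTbdd : BddBelow T := ⟨0, fun v ⟨z, hz, hvz⟩ => hvz ▸ hDnonneg z hz.2⟩
  set m := sInf T with hmdef
  have hmle : ∀ q ∈ C ∩ S, m ≤ D q := fun q hq => csInf_le hTbdd ⟨q, hq, rfl⟩
  have hm0 : 0 ≤ m := le_csInf hTne fun v hv => by
    obtain ⟨z, hz, rfl⟩ := hv; exact hDnonneg z hz.2
  -- minimizing sequence
  have hseq : ∀ n : ℕ, ∃ z, z ∈ C ∩ S ∧ D z < m + 1/(n+1) := by
    intro n
    have hlt : m < m + 1/(n+1) := lt_add_of_pos_right _ (by positivity)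
    obtain ⟨v, hv, hvlt⟩ := exists_lt_of_csInf_lt hTne hlt
    obtain ⟨z, hz, rfl⟩ := hv
    exact ⟨z, hz, hvlt⟩
  choose x hxCS hxlt using hseq
  clear_value m
  have hDxub : ∀ n, D (x n) ≤ m + 1 := by
    intro n
    have h1 := hxlt n
    have h2 : (1:ℝ)/(n+1) ≤ 1 := by
      rw [div_le_one (by positivity)]; linarith [Nat.cast_nonneg (α := ℝ) n]
    linarith
  -- boundedness of the sequence
  obtain ⟨R, hR0, hRball⟩ : ∃ R > 0, closedBall ω R ⊆ interior S := by
    obtain ⟨ε, hε, hb⟩ := Metric.isOpen_iff.mp isOpen_interior ω hω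
    exact ⟨ε/2, by linarith, (closedBall_subset_ball (by linarith)).trans hb⟩
  have hbdd : ∃ B, ∀ n, x n ∈ closedBall ω B := by
    by_cases hsp : (Metric.sphere ω R).Nonempty
    · have hsphsub : Metric.sphere ω R ⊆ interior S := fun z hz =>
        hRball (sphere_subset_closedBall hz)
      have hcont : ContinuousOn D (Metric.sphere ω R) := fun z hz =>
        (hDcont z (hsphsub hz)).continuousWithinAt
      obtain ⟨zmin, hzmem, hzmin⟩ := (isCompact_sphere ω R).exists_isMinOn hsp hcont
      set μ := D zmin with hμdef
      have hzne : zmin ≠ ω := by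
        intro hzz
        rw [hzz, mem_sphere, dist_self] at hzmem
        exact hR0.ne hzmem
      clear_value μ
      have hμpos : 0 < μ := hμdef ▸ hDpos zmin (interior_subset (hsphsub hzmem)) hzne
      refine ⟨max R ((m+1) * R / μ), fun n => ?_⟩
      rw [mem_closedBall, dist_eq_norm]
      by_cases hfar : ‖x n - ω‖ ≤ R
      · exact hfar.trans (le_max_left _ _)
      · push_neg at hfar
        have hnorm0 : 0 < ‖x n - ω‖ := lt_trans hR0 hfar
        set t := R / ‖x n - ω‖ with htdef
        clear_value t
        have ht0 : 0 < t := by rw [htdef]; exact div_pos hR0 hnorm0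
        have ht1 : t < 1 := by rw [htdef]; exact (div_lt_one hnorm0).mpr hfar
        set yy := ω + t • (x n - ω) with hyydef
        clear_value yy
        have hyyS : yy ∈ S := by
          have he : yy = (1 - t) • ω + t • x n := by simp only [hyydef]; module
          rw [he]; exact hSconv hωS (hxCS n).2 (by linarith) ht0.le (by ring)
        have hyysph : yy ∈ Metric.sphere ω R := by
          have hsub : yy - ω = t • (x n - ω) := by rw [hyydef]; abel
          rw [Metric.mem_sphere, dist_eq_norm, hsub, norm_smul, Real.norm_eq_abs,
            abs_of_pos ht0, htdef]
          field_simp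
        have hDyy : D yy ≤ t * D (x n) := by
          have hcv := hDconv.2 hωS (hxCS n).2 (by linarith : (0:ℝ) ≤ 1 - t)
            ht0.le (by ring)
          have he : (1-t) • ω + t • x n = yy := by simp only [hyydef]; module
          rw [he] at hcv
          simp only [smul_eq_mul, hD0] at hcv
          linarith
        have hμyy : μ ≤ D yy := by rw [hμdef]; exact hzmin hyysph
        have hDxn := hDxub n
        have hm1 : 0 < m + 1 := by linarith
        have hchain : μ * ‖x n - ω‖ ≤ R * (m + 1) := by
          have h1 : μ ≤ t * (m+1) := by
            have := hDnonneg (x n) (hxCS n).2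
            nlinarith
          have h2 : t * (m+1) * ‖x n - ω‖ = R * (m+1) := by
            rw [htdef]; field_simp
          nlinarith
        have : ‖x n - ω‖ ≤ (m+1) * R / μ := by
          rw [le_div_iff₀ hμpos]; nlinarith
        exact this.trans (le_max_right _ _)
    · refine ⟨R, fun n => ?_⟩
      rw [mem_closedBall, dist_eq_norm]
      by_contra hfar
      push_neg at hfar
      have hnorm0 : 0 < ‖x n - ω‖ := lt_trans hR0 hfar
      refine hsp ⟨ω + (R / ‖x n - ω‖) • (x n - ω), ?_⟩
      rw [mem_sphere, dist_eq_norm]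
      simp only [add_sub_cancel_left, norm_smul, Real.norm_eq_abs,
        abs_of_pos (div_pos hR0 hnorm0)]
      field_simp
  obtain ⟨B, hB⟩ := hbdd
  obtain ⟨p, hpball, φ, hφmono, hφtends⟩ := (isCompact_closedBall ω B).tendsto_subseq hB
  have hpC : p ∈ C := hCclosed.mem_of_tendsto hφtends
    (Eventually.of_forall fun n => (hxCS _).1)
  have hpclS : p ∈ closure S := mem_closure_of_tendsto hφtends
    (Eventually.of_forall fun n => (hxCS _).2)
  have hDx : Tendsto (fun n => D (x (φ n))) atTop (𝓝 m) := by
    have hub : Tendsto (fun n : ℕ => m + 1/(n+1)) atTop (𝓝 m) := by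
      have h0 : Tendsto (fun n : ℕ => 1/((n:ℝ)+1)) atTop (𝓝 0) :=
        tendsto_one_div_add_atTop_nhds_zero_nat
      simpa using tendsto_const_nhds.add h0
    refine tendsto_of_tendsto_of_tendsto_of_le_of_le tendsto_const_nhds hub
      (fun n => hmle _ (hxCS _)) (fun n => ?_)
    have h1 := (hxlt (φ n)).le
    have hφn : (n:ℝ) ≤ (φ n : ℝ) := by exact_mod_cast hφmono.le_apply
    have h2 : (1:ℝ)/(φ n + 1) ≤ 1/(n+1) :=
      one_div_le_one_div_of_le (by positivity) (by linarith)
    linarith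
  have hyint : ∀ t ∈ Set.Ioo (0:ℝ) 1, p + t • (c - p) ∈ interior S := by
    intro t ht
    have he : p + t • (c - p) = t • c + (1-t) • p := by module
    rw [he]
    exact hSconv.combo_interior_closure_mem_interior hcint hpclS ht.1
      (by linarith [ht.2]) (by ring)
  have hpint : p ∈ interior S := by
    by_contra hpni
    have hyCS : ∀ t ∈ Set.Ioo (0:ℝ) 1, p + t • (c - p) ∈ C ∩ S := by
      intro t ht
      refine ⟨?_, interior_subset (hyint t ht)⟩
      have he : p + t • (c - p) = (1-t) • p + t • c := by module
      rw [he]; exact hCconv hpC hcC (by linarith [ht.2]) ht.1.le (by ring)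
    have hm' : ∀ t ∈ Set.Ioo (0:ℝ) 1, m ≤ D (p + t • (c - p)) :=
      fun t ht => hmle _ (hyCS t ht)
    have hxtend : Tendsto (fun n => x (φ n)) atTop (𝓝 p) := hφtends
    have hup : ∀ t ∈ Set.Ioo (0:ℝ) 1, D (p + t • (c - p)) ≤ m + t * (D c - m) := by
      intro t ht
      set zz : ℕ → H := fun n => x (φ n) + t • (c - x (φ n)) with hzzdef
      clear_value zz
      have hzzS : ∀ n, zz n ∈ S := by
        intro n
        have he : zz n = t • c + (1-t) • x (φ n) := by simp only [hzzdef]; module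
        rw [he]
        exact interior_subset (hSconv.combo_interior_closure_mem_interior hcint
          (subset_closure (hxCS (φ n)).2) ht.1 (by linarith [ht.2]) (by ring))
      have hzztend : Tendsto zz atTop (𝓝 (p + t • (c - p))) := by
        rw [hzzdef]
        exact hxtend.add (((tendsto_const_nhds.sub hxtend).const_smul t))
      have hDzz : ∀ n, D (zz n) ≤ (1-t) * D (x (φ n)) + t * D c := by
        intro n
        have hcv := hDconv.2 (hxCS (φ n)).2 (interior_subset hcint)
          (by linarith [ht.2] : (0:ℝ) ≤ 1 - t) ht.1.le (by ring)
        have he : (1-t) • x (φ n) + t • c = zz n := by simp only [hzzdef]; module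
        rw [he] at hcv
        simpa only [smul_eq_mul] using hcv
      have hlim1 : Tendsto (fun n => D (zz n)) atTop (𝓝 (D (p + t • (c - p)))) :=
        ((hDcont _ (hyint t ht)).tendsto).comp hzztend
      have hlim2 : Tendsto (fun n => (1-t) * D (x (φ n)) + t * D c) atTop
          (𝓝 ((1-t) * m + t * D c)) := (hDx.const_mul _).add_const _
      have := le_of_tendsto_of_tendsto' hlim1 hlim2 hDzz
      linarith
    have hbig : ∀ B' : ℝ, ∃ t ∈ Set.Ioo (0:ℝ) 1,
        B' < ‖g (p + t • (c - p)) - g ω‖ := by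
      intro B'
      have htmem : ∀ n : ℕ, (1/(n+2) : ℝ) ∈ Set.Ioo (0:ℝ) 1 := by
        intro n
        constructor
        · positivity
        · rw [div_lt_one (by positivity)]
          linarith [Nat.cast_nonneg (α := ℝ) n]
      have huint : ∀ n : ℕ, p + (1/(n+2) : ℝ) • (c - p) ∈ interior S :=
        fun n => hyint _ (htmem n)
      have hutend : Tendsto (fun n : ℕ => p + (1/(n+2) : ℝ) • (c - p)) atTop (𝓝 p) := by
        have h0 : Tendsto (fun n : ℕ => (((n:ℝ)+2))⁻¹) atTop (𝓝 0) :=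
          (tendsto_atTop_add_const_right atTop 2 tendsto_natCast_atTop_atTop).inv_tendsto_atTop
        have h0' : Tendsto (fun n : ℕ => (1/(n+2) : ℝ)) atTop (𝓝 0) := by
          simpa [one_div] using h0
        have hadd : Tendsto (fun n : ℕ => p + (1/(n+2) : ℝ) • (c - p)) atTop
            (𝓝 (p + (0:ℝ) • (c - p))) := tendsto_const_nhds.add (h0'.smul_const (c - p))
        simpa using hadd
      have hpfr : p ∈ frontier S := ⟨hpclS, hpni⟩
      have hgrow := hsteep _ huint p hpfr hutend
      obtain ⟨n, hn⟩ := (hgrow.eventually (eventually_gt_atTop (B' + ‖g ω‖))).exists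
      refine ⟨1/(n+2), htmem n, ?_⟩
      have hns := norm_sub_norm_le (g (p + (1/(n+2) : ℝ) • (c - p))) (g ω)
      linarith
    exact key_frontier hSconv hDconv hgD hpclS hcint hm' hup hbig
  have hDp : D p = m :=
    tendsto_nhds_unique (((hDcont p hpint).tendsto).comp hφtends) hDx
  refine ⟨p, ⟨hpC, hpint⟩, fun q hq => hDp ▸ hmle q hq, ?_⟩
  intro q hq hqmin
  by_contra hne
  have hDq : D q = m :=
    le_antisymm (hDp ▸ hqmin p ⟨hpC, interior_subset hpint⟩) (hmle q hq)
  have hmidCS : (1/2:ℝ) • q + (1/2:ℝ) • p ∈ C ∩ S :=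
    ⟨hCconv hq.1 hpC (by norm_num) (by norm_num) (by norm_num),
     hSconv hq.2 (interior_subset hpint) (by norm_num) (by norm_num) (by norm_num)⟩
  have hlt := hDstrict.2 hq.2 (interior_subset hpint) hne
    (by norm_num : (0:ℝ) < 1/2) (by norm_num : (0:ℝ) < 1/2) (by norm_num)
  have hge := hmle _ hmidCS
  simp only [smul_eq_mul, hDq, hDp] at hlt
  linarith
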